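/- Let G be a graph and K a Hausdorff topological group with compact subset A. Then G has an A-tension (values in A, antisymmetric, summing to zero around every finite cycle) if and only if for every finite set 𝒞 of finite oriented cycles of G there is a map with values in A summing to zero around every cycle in 𝒞. -/

import Mathlib

/-- The sum of the values of `f` along the darts of a walk (in order). -/
def walkSum {V K : Type*} [AddGroup K] {G : SimpleGraph V} {u v : V}
    (f : V → V → K) (p : G.Walk u v) : K :=
  (p.darts.map fun d => f d.toProd.1 d.toProd.2).sum

lemma walkSum_congr {V K : Type*} [AddGroup K] {G : SimpleGraph V} {u v : V}
    {f g : V → V → K} (h : ∀ x y, G.Adj x y → f x y = g x y) (p : G.Walk u v) :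
    walkSum f p = walkSum g p := by
  unfold walkSum
  congr 1
  exact List.map_congr_left fun d _ => h _ _ d.adj

lemma continuous_walkSum {V K : Type*} [AddGroup K] [TopologicalSpace K]
    [IsTopologicalAddGroup K] {G : SimpleGraph V} {u v : V} (p : G.Walk u v) :
    Continuous fun f : V → V → K => walkSum f p := by
  unfold walkSum
  exact continuous_list_sum _ fun d _ =>
    ((continuous_apply d.toProd.2).comp (continuous_apply d.toProd.1))

/-- Compactness theorem for `A`-tensions: `G` has an `A`-tension (values in the
compact set `A`, antisymmetric, summing to zero around every finite cycle) iff for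
every finite family of finite cycles of `G` there is a map with values in `A`
summing to zero around every cycle of the family. -/
theorem stmt18 {V K : Type*} [AddGroup K] [TopologicalSpace K]
    [IsTopologicalAddGroup K] [T2Space K]
    (G : SimpleGraph V) (A : Set K) (hA : IsCompact A) :
    (∃ f : V → V → K,
        (∀ x y, G.Adj x y → f x y ∈ A) ∧
        (∀ x y : V, f y x = - f x y) ∧
        (∀ (v : V) (c : G.Walk v v), c.IsCycle → walkSum f c = 0)) ↔
      ∀ (n : ℕ) (C : Fin n → Σ v : V, G.Walk v v), (∀ i, (C i).2.IsCycle) →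
        ∃ f : V → V → K,
          (∀ x y, G.Adj x y → f x y ∈ A) ∧
          (∀ x y : V, f y x = - f x y) ∧
          (∀ i, walkSum f (C i).2 = 0) := by
  constructor
  · rintro ⟨f, h1, h2, h3⟩ n C hC
    exact ⟨f, h1, h2, fun i => h3 _ _ (hC i)⟩
  · intro H
    -- compact base set
    set B : Set K := A ∪ (Neg.neg '' A) ∪ {0} with hBdef
    have hB : IsCompact B := ((hA.union (hA.image continuous_neg)).union isCompact_singleton)
    set S : Set (V → V → K) :=
      {f | (∀ x y, f x y ∈ B) ∧ (∀ x y, G.Adj x y → f x y ∈ A) ∧ (∀ x y, f y x = - f x y)}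
      with hSdef
    have hScomp : IsCompact S := by
      have h1 : IsCompact {f : V → V → K | ∀ x y, f x y ∈ B} := by
        have := isCompact_univ_pi (ι := V) (s := fun _ : V => Set.univ.pi fun _ : V => B)
          (fun _ => isCompact_univ_pi fun _ => hB)
        convert this using 1
        ext f
        simp [Set.mem_univ_pi]
      have h2 : IsClosed {f : V → V → K | (∀ x y, G.Adj x y → f x y ∈ A) ∧
          (∀ x y, f y x = - f x y)} := by
        rw [Set.setOf_and]
        apply IsClosed.inter
        · have : {f : V → V → K | ∀ x y, G.Adj x y → f x y ∈ A} =
              ⋂ x, ⋂ y, ⋂ (_ : G.Adj x y), {f | f x y ∈ A} := by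
            ext f; simp
          rw [this]
          exact isClosed_iInter fun x => isClosed_iInter fun y => isClosed_iInter fun _ =>
            hA.isClosed.preimage ((continuous_apply y).comp (continuous_apply x))
        · have : {f : V → V → K | ∀ x y, f y x = - f x y} =
              ⋂ x, ⋂ y, {f | f y x = - f x y} := by
            ext f; simp
          rw [this]
          exact isClosed_iInter fun x => isClosed_iInter fun y =>
            isClosed_eq (by fun_prop) (by fun_prop)
      have : S = {f : V → V → K | ∀ x y, f x y ∈ B} ∩
          {f | (∀ x y, G.Adj x y → f x y ∈ A) ∧ (∀ x y, f y x = - f x y)} := by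
        ext f; simp [hSdef, and_assoc]
      rw [this]
      exact h1.inter_right h2
    -- closed cycle constraints
    set ι := Σ v : V, {c : G.Walk v v // c.IsCycle} with hιdef
    set t : ι → Set (V → V → K) := fun i => {f | walkSum f i.2.1 = 0} with htdef
    have htc : ∀ i, IsClosed (t i) := fun i =>
      isClosed_eq (continuous_walkSum i.2.1) continuous_const
    have hfin : ∀ u : Finset ι, (S ∩ ⋂ i ∈ u, t i).Nonempty := by
      intro u
      classical
      set l := u.toList with hl
      obtain ⟨f, hf1, hf2, hf3⟩ := H l.length
        (fun j => ⟨(l.get j).1, (l.get j).2.1⟩) (fun j => (l.get j).2.2)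
      set f' : V → V → K := fun x y => if G.Adj x y then f x y else 0 with hf'def
      have hcong : ∀ x y, G.Adj x y → f' x y = f x y := fun x y h => if_pos h
      refine ⟨f', ⟨⟨fun x y => ?_, fun x y h => ?_, fun x y => ?_⟩, ?_⟩⟩
      · by_cases h : G.Adj x y
        · simp only [hf'def, if_pos h]
          exact Or.inl (Or.inl (hf1 x y h))
        · simp only [hf'def, if_neg h]
          exact Or.inr rfl
      · simpa [hf'def, if_pos h] using hf1 x y h
      · by_cases h : G.Adj x y
        · simp only [hf'def, if_pos h, if_pos h.symm]
          exact hf2 x y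
        · have h' : ¬ G.Adj y x := fun hh => h hh.symm
          simp [hf'def, if_neg h, if_neg h']
      · simp only [Set.mem_iInter]
        intro i hi
        obtain ⟨j, hj⟩ := List.mem_iff_get.mp (Finset.mem_toList.mpr hi)
        have : walkSum f' i.2.1 = walkSum f i.2.1 := walkSum_congr hcong _
        rw [htdef]
        simp only [Set.mem_setOf_eq, this]
        have := hf3 j
        rw [hj] at this
        exact this
    obtain ⟨f, hfS, hft⟩ := hScomp.inter_iInter_nonempty t htc hfin
    refine ⟨f, hfS.2.1, hfS.2.2, fun v c hc => ?_⟩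
    have := Set.mem_iInter.mp hft ⟨v, c, hc⟩
    exact this
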